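/- Let $D \subset \mathbb{R}^3$ be a nonempty bounded open set, $p, p' \in \mathbb{R}^3 \setminus \overline{D}$ with $c = \min_{x \in \partial D}(|p-x| + |x-p'|) > |p-p'|$. Fix $s > 0$ with $s < \inf_{\omega \in S^2} s(\omega)$ where $s(\omega) = \frac{c^2 - |p-p'|^2}{2(c - \omega\cdot(p-p'))}$. Let $\omega \in S^2$. If $\min_{x \in \partial D}(|p-x| + |x - (p'+s\omega)|) = c - s$, then $p' + s(\omega)\omega \in \partial D$. -/

import Mathlib

open RealInnerProductSpace

/-- Converse: if the minimum of `‖p-x‖+‖x-(p'+sω)‖` over `∂D` equals `c - s`, with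
`0 < s < s(ω')` for every unit vector `ω'`, then `p' + s(ω)ω ∈ ∂D`. -/
theorem stmt8 (D : Set (EuclideanSpace ℝ (Fin 3))) (p p' ω : EuclideanSpace ℝ (Fin 3))
    (c s : ℝ)
    (hD : D.Nonempty) (hDo : IsOpen D) (hDb : Bornology.IsBounded D)
    (hp : p ∉ closure D) (hp' : p' ∉ closure D)
    (hc : IsLeast {r : ℝ | ∃ x ∈ frontier D, r = ‖p - x‖ + ‖x - p'‖} c)
    (hcpp' : ‖p - p'‖ < c) (hω : ‖ω‖ = 1) (hs : 0 < s)
    (hss : ∀ ω' : EuclideanSpace ℝ (Fin 3), ‖ω'‖ = 1 →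
      s < (c ^ 2 - ‖p - p'‖ ^ 2) / (2 * (c - (inner ℝ (ω') (p - p') : ℝ))))
    (hmin : IsLeast {r : ℝ | ∃ x ∈ frontier D, r = ‖p - x‖ + ‖x - (p' + s • ω)‖} (c - s)) :
    p' + ((c ^ 2 - ‖p - p'‖ ^ 2) / (2 * (c - (inner ℝ (ω) (p - p') : ℝ)))) • ω ∈ frontier D := by
  obtain ⟨x, hx, hxe⟩ := hmin.1
  have hlow : c ≤ ‖p - x‖ + ‖x - p'‖ := hc.2 ⟨x, hx, rfl⟩
  have hsω : ‖s • ω‖ = s := by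
    rw [norm_smul, hω, Real.norm_eq_abs, abs_of_pos hs, mul_one]
  have hdecomp : (x - (p' + s • ω)) + s • ω = x - p' := by abel
  have htri : ‖x - p'‖ ≤ ‖x - (p' + s • ω)‖ + s := by
    calc ‖x - p'‖ = ‖(x - (p' + s • ω)) + s • ω‖ := by rw [hdecomp]
    _ ≤ ‖x - (p' + s • ω)‖ + ‖s • ω‖ := norm_add_le _ _
    _ = ‖x - (p' + s • ω)‖ + s := by rw [hsω]
  have heq : ‖p - x‖ + ‖x - p'‖ = c := by
    have : ‖p - x‖ + ‖x - p'‖ ≤ c := by linarith [hxe ▸ le_refl (‖p - x‖ + ‖x - (p' + s • ω)‖)]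
    linarith
  have hnorm_eq : ‖(x - (p' + s • ω)) + s • ω‖ = ‖x - (p' + s • ω)‖ + ‖s • ω‖ := by
    rw [hdecomp, hsω]; linarith
  have hray : SameRay ℝ (x - (p' + s • ω)) (s • ω) := sameRay_iff_norm_add.mpr hnorm_eq
  have hsω0 : s • ω ≠ 0 := by
    intro h; rw [← norm_eq_zero, hsω] at h; linarith
  obtain ⟨t, ht0, ht⟩ := hray.symm.exists_nonneg_left hsω0
  -- x - p' = (t * s + s) • ω
  set r : ℝ := t * s + s with hrdef
  have hr : x - p' = r • ω := by
    rw [← hdecomp, ← ht, smul_smul, hrdef, add_smul]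
  have hrpos : 0 < r := by positivity
  have hxp' : ‖x - p'‖ = r := by
    rw [hr, norm_smul, hω, Real.norm_eq_abs, abs_of_pos hrpos, mul_one]
  have hpx : ‖p - x‖ = c - r := by linarith [heq, hxp']
  have hinner : (inner ℝ ω (p - p') : ℝ) ≤ ‖p - p'‖ := by
    calc (inner ℝ ω (p - p') : ℝ) ≤ ‖ω‖ * ‖p - p'‖ := real_inner_le_norm _ _
    _ = ‖p - p'‖ := by rw [hω, one_mul]
  have hden : 0 < c - (inner ℝ ω (p - p') : ℝ) := by linarith
  have hsq : (c - r) ^ 2 = ‖p - p'‖ ^ 2 - 2 * r * (inner ℝ ω (p - p') : ℝ) + r ^ 2 := by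
    have h1 : p - x = (p - p') - r • ω := by rw [← hr]; abel
    have h2 : ‖(p - p') - r • ω‖ ^ 2 = ‖p - p'‖ ^ 2 - 2 * (inner ℝ (p - p') (r • ω) : ℝ)
        + ‖r • ω‖ ^ 2 := by
      rw [@norm_sub_sq_real]
    have h3 : (inner ℝ (p - p') (r • ω) : ℝ) = r * (inner ℝ ω (p - p') : ℝ) := by
      rw [real_inner_smul_right, real_inner_comm]
    have h4 : ‖r • ω‖ = r := by
      rw [norm_smul, hω, Real.norm_eq_abs, abs_of_pos hrpos, mul_one]
    rw [← hpx, h1, h2, h3, h4]; ring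
  have hrval : r = (c ^ 2 - ‖p - p'‖ ^ 2) / (2 * (c - (inner ℝ ω (p - p') : ℝ))) := by
    rw [eq_div_iff (by positivity)]
    nlinarith [hsq]
  have : p' + ((c ^ 2 - ‖p - p'‖ ^ 2) / (2 * (c - (inner ℝ ω (p - p') : ℝ)))) • ω = x := by
    rw [← hrval, ← hr]; abel
  rw [this]; exact hx
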